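/- Let X be a simplicial set such that for every n ≥ 2 the map D_n : X_n → X₁ × X_{n-1} given by D_n(x) = ((d₂)^{n-1}(x), d₀(x)) is a bijection from X_n onto the set {(x₁, x₂) ∈ X₁ × X_{n-1} : d₀(x₁) = (d₁)^{n-1}(x₂)}. Then there is a small category C whose set of objects is X₀ and whose set of morphisms is X₁ — in which each f ∈ X₁ is a morphism from d₀(f) to d₁(f), the identity morphism of x ∈ X₀ is s₀(x), and the composite of f₁, f₂ ∈ X₁ with d₀(f₁) = d₁(f₂) is d₁(D₂⁻¹(f₁, f₂)) — such that X is isomorphic, as a simplicial set, to the nerve of C. -/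

import Mathlib

set_option maxHeartbeats 1000000


open CategoryTheory Simplicial
open Opposite

universe u

namespace Paper

/-- Iterated second face map `(d₂)ⁿ : Xₙ₊₁ → X₁`. -/
def iterD2 (X : SSet.{u}) : ∀ n : ℕ, X _⦋n + 1⦌ → X _⦋1⦌ := fun n x =>
  match n, x with
  | 0, x => x
  | n + 1, x => iterD2 X n (X.δ 2 x)

/-- Iterated first face map `(d₁)ⁿ : Xₙ → X₀`. -/
def iterD1 (X : SSet.{u}) : ∀ n : ℕ, X _⦋n⦌ → X _⦋0⦌ := fun n x =>
  match n, x with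
  | 0, x => x
  | n + 1, x => iterD1 X n (X.δ 1 x)

/-- Compatibility of a category structure on the vertices of `X` with the simplicial
structure: morphisms `a ⟶ b` correspond to `1`-simplices `f` with `d₀ f = a` and
`d₁ f = b`, identities to degenerate simplices, composition to
`f₁ ∘ f₂ = d₁(D₂⁻¹(f₁, f₂))`, and `X` is isomorphic, as a simplicial set, to the nerve
(with the opposite-orientation convention of the paper) of the category. -/
def NerveCompat (X : SSet.{u}) (C : Type u) [SmallCategory C] (e : C ≃ X _⦋0⦌) : Prop :=
  ∃ he : ∀ a b : C, (a ⟶ b) ≃ {f : X _⦋1⦌ // X.δ 0 f = e a ∧ X.δ 1 f = e b},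
    (∀ a : C, ((he a a) (𝟙 a) : X _⦋1⦌) = X.σ 0 (e a)) ∧
    (∀ (a b c : C) (f : a ⟶ b) (g : b ⟶ c) (x : X _⦋2⦌),
      X.δ 2 x = ((he b c) g : X _⦋1⦌) → X.δ 0 x = ((he a b) f : X _⦋1⦌) →
        ((he a c) (f ≫ g) : X _⦋1⦌) = X.δ 1 x) ∧
    Nonempty (X ≅ CategoryTheory.nerve Cᵒᵖ)

structure Gadget (X : SSet.{u}) : Type u where
  inv : ∀ (n : ℕ) (q : X _⦋1⦌ × X _⦋n+1⦌), X.δ 0 q.1 = iterD1 X (n+1) q.2 → X _⦋n+2⦌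
  iterD2_inv : ∀ n q h, iterD2 X (n+1) (inv n q h) = q.1
  δ0_inv : ∀ n q h, X.δ 0 (inv n q h) = q.2
  inj : ∀ (n : ℕ) (x y : X _⦋n+2⦌), iterD2 X (n+1) x = iterD2 X (n+1) y →
    X.δ 0 x = X.δ 0 y → x = y

variable {X : SSet.{u}}

/-- raw homs -/
def Hom' (X : SSet.{u}) (a b : X _⦋0⦌) : Type u :=
  {f : X.obj (op (SimplexCategory.mk 1)) // X.δ 0 f = a ∧ X.δ 1 f = b}

lemma d1_d1_eq (w : X _⦋2⦌) : X.δ 1 (X.δ 1 w) = X.δ 1 (X.δ 2 w) := by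
  have := ConcreteCategory.congr_hom (X.δ_comp_δ (n := 0) (i := 1) (j := 1) le_rfl) w
  exact this.symm

lemma d0_d1_eq (w : X _⦋2⦌) : X.δ 0 (X.δ 1 w) = X.δ 0 (X.δ 0 w) := by
  have := ConcreteCategory.congr_hom (X.δ_comp_δ (n := 0) (i := 0) (j := 0) le_rfl) w
  exact this

def comp2 (G : Gadget X) {a b c : X _⦋0⦌} (u : Hom' X a b) (v : Hom' X b c) : X _⦋2⦌ :=
  G.inv 0 (v.1, u.1) (v.2.1.trans u.2.2.symm)

lemma comp2_d2 (G : Gadget X) {a b c : X _⦋0⦌} (u : Hom' X a b) (v : Hom' X b c) :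
    X.δ 2 (comp2 G u v) = v.1 :=
  G.iterD2_inv 0 (v.1, u.1) _

lemma comp2_d0 (G : Gadget X) {a b c : X _⦋0⦌} (u : Hom' X a b) (v : Hom' X b c) :
    X.δ 0 (comp2 G u v) = u.1 :=
  G.δ0_inv 0 (v.1, u.1) _

def comp' (G : Gadget X) {a b c : X _⦋0⦌} (u : Hom' X a b) (v : Hom' X b c) : Hom' X a c :=
  ⟨X.δ 1 (comp2 G u v), by
    rw [d0_d1_eq, comp2_d0]; exact u.2.1, by
    rw [d1_d1_eq, comp2_d2]; exact v.2.2⟩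

def id' (X : SSet.{u}) (a : X _⦋0⦌) : Hom' X a a :=
  ⟨X.σ 0 a, ConcreteCategory.congr_hom (X.δ_comp_σ_self (i := 0)) a,
    ConcreteCategory.congr_hom (X.δ_comp_σ_succ (i := 0)) a⟩

end Paper
namespace Paper
variable {X : SSet.{u}}

/-- comp_spec: any 2-simplex witnesses the composite of its faces -/
lemma comp'_spec (G : Gadget X) {a b c : X _⦋0⦌} (u : Hom' X a b) (v : Hom' X b c)
    (x : X _⦋2⦌) (h2 : X.δ 2 x = v.1) (h0 : X.δ 0 x = u.1) :
    (comp' G u v).1 = X.δ 1 x := by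
  have : comp2 G u v = x := by
    apply G.inj 0
    · show X.δ 2 _ = X.δ 2 _
      rw [comp2_d2, h2]
    · rw [comp2_d0, h0]
  show X.δ 1 (comp2 G u v) = X.δ 1 x
  rw [this]

lemma d0_s1 (f : X _⦋1⦌) : X.δ 0 (X.σ 1 f) = X.σ 0 (X.δ 0 f) :=
  ConcreteCategory.congr_hom (X.δ_comp_σ_of_le (i := 0) (j := 0) (by simp)) f

lemma d2_s1 (f : X _⦋1⦌) : X.δ 2 (X.σ 1 f) = f :=
  ConcreteCategory.congr_hom (X.δ_comp_σ_succ' (n := 1) (i := 1) (j := 2) (by rfl)) f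

lemma d1_s1 (f : X _⦋1⦌) : X.δ 1 (X.σ 1 f) = f :=
  ConcreteCategory.congr_hom (X.δ_comp_σ_self' (n := 1) (i := 1) (j := 1) (by rfl)) f

lemma d0_s0 (f : X _⦋1⦌) : X.δ 0 (X.σ 0 f) = f :=
  ConcreteCategory.congr_hom (X.δ_comp_σ_self' (i := 0) (j := 0) (by rfl)) f

lemma d1_s0 (f : X _⦋1⦌) : X.δ 1 (X.σ 0 f) = f :=
  ConcreteCategory.congr_hom (X.δ_comp_σ_succ' (i := 0) (j := 1) (by rfl)) f

lemma d2_s0 (f : X _⦋1⦌) : X.δ 2 (X.σ 0 f) = X.σ 0 (X.δ 1 f) :=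
  ConcreteCategory.congr_hom (X.δ_comp_σ_of_gt (n := 0) (i := 1) (j := 0) (by decide)) f

lemma id_comp' (G : Gadget X) {a b : X _⦋0⦌} (f : Hom' X a b) :
    comp' G (id' X a) f = f := by
  apply Subtype.ext
  have := comp'_spec G (id' X a) f (X.σ 1 f.1) (by rw [d2_s1]) (by
    rw [d0_s1, f.2.1]; rfl)
  rw [this, d1_s1]

lemma comp_id' (G : Gadget X) {a b : X _⦋0⦌} (f : Hom' X a b) :
    comp' G f (id' X b) = f := by
  apply Subtype.ext
  have := comp'_spec G f (id' X b) (X.σ 0 f.1) (by rw [d2_s0, f.2.2]; rfl)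
    (by rw [d0_s0])
  rw [this, d1_s0]

lemma assoc' (G : Gadget X) {a b c d : X _⦋0⦌} (f : Hom' X a b) (g : Hom' X b c)
    (h : Hom' X c d) :
    comp' G (comp' G f g) h = comp' G f (comp' G g h) := by
  have hcond : X.δ 0 h.1 = iterD1 X 2 (comp2 G f g) := by
    show _ = iterD1 X 1 (X.δ 1 (comp2 G f g))
    show _ = X.δ 1 (X.δ 1 (comp2 G f g))
    rw [d1_d1_eq, comp2_d2, g.2.2, h.2.1]
  set z := G.inv 1 (h.1, comp2 G f g) hcond with hz
  have hd2d2 : X.δ 2 (X.δ 2 z) = h.1 := G.iterD2_inv 1 (h.1, comp2 G f g) hcond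
  have hd0 : X.δ 0 z = comp2 G f g := G.δ0_inv 1 (h.1, comp2 G f g) hcond
  -- face identities on X _⦋3⦌
  have e02 : X.δ 0 (X.δ 2 z) = X.δ 1 (X.δ 0 z) :=
    (ConcreteCategory.congr_hom (X.δ_comp_δ (n := 1) (i := 0) (j := 1) (by simp)) z)
  have e03 : X.δ 0 (X.δ 3 z) = X.δ 2 (X.δ 0 z) :=
    (ConcreteCategory.congr_hom (X.δ_comp_δ (n := 1) (i := 0) (j := 2) (by simp [Fin.le_def])) z)
  have e23 : X.δ 2 (X.δ 3 z) = X.δ 2 (X.δ 2 z) :=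
    ConcreteCategory.congr_hom (X.δ_comp_δ (n := 1) (i := 2) (j := 2) le_rfl) z
  have e13 : X.δ 1 (X.δ 3 z) = X.δ 2 (X.δ 1 z) :=
    (ConcreteCategory.congr_hom (X.δ_comp_δ (n := 1) (i := 1) (j := 2) (by simp [Fin.le_def])) z)
  have e01 : X.δ 0 (X.δ 1 z) = X.δ 0 (X.δ 0 z) :=
    (ConcreteCategory.congr_hom (X.δ_comp_δ (n := 1) (i := 0) (j := 0) le_rfl) z)
  have e11 : X.δ 1 (X.δ 1 z) = X.δ 1 (X.δ 2 z) :=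
    (ConcreteCategory.congr_hom (X.δ_comp_δ (n := 1) (i := 1) (j := 1) le_rfl) z).symm
  -- (f ≫ g) ≫ h = δ₁ δ₂ z
  have hfg_h : (comp' G (comp' G f g) h).1 = X.δ 1 (X.δ 2 z) := by
    apply comp'_spec G _ _ (X.δ 2 z) hd2d2
    rw [e02, hd0]
    exact (comp'_spec G f g (comp2 G f g) (comp2_d2 G f g) (comp2_d0 G f g)).symm
  -- g ≫ h = δ₂ δ₁ z  (via δ₃ z)
  have hgh : (comp' G g h).1 = X.δ 2 (X.δ 1 z) := by
    rw [← e13]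
    apply comp'_spec G _ _ (X.δ 3 z) (by rw [e23, hd2d2])
    rw [e03, hd0, comp2_d2]
  -- f ≫ (g ≫ h) = δ₁ δ₁ z
  have hf_gh : (comp' G f (comp' G g h)).1 = X.δ 1 (X.δ 1 z) := by
    apply comp'_spec G _ _ (X.δ 1 z) hgh.symm
    rw [e01, hd0, comp2_d0]
  apply Subtype.ext
  rw [hfg_h, hf_gh, e11]

/-- The category with objects `X _⦋0⦌`. -/
def Ob (X : SSet.{u}) (_G : Gadget X) : Type u := X _⦋0⦌

instance instCat (G : Gadget X) : SmallCategory (Ob X G) where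
  Hom a b := Hom' X a b
  id a := id' X a
  comp u v := comp' G u v
  id_comp := id_comp' G
  comp_id := comp_id' G
  assoc := assoc' G

end Paper
namespace Paper
open SimplexCategory
variable {X : SSet.{u}}

lemma map_map {a b c : SimplexCategory} (f : a ⟶ b) (g : b ⟶ c) (x : X.obj (op c)) :
    X.map f.op (X.map g.op x) = X.map (f ≫ g).op x := by
  rw [op_comp, X.map_comp]; rfl

/-- vertices -/
def V {n : ℕ} (x : X _⦋n⦌) (i : Fin (n + 1)) : X _⦋0⦌ :=
  X.map (SimplexCategory.const (SimplexCategory.mk 0) (SimplexCategory.mk n) i).op x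

/-- edges -/
def E {n : ℕ} (x : X _⦋n⦌) (i j : Fin (n + 1)) (h : i ≤ j) : X.obj (op (SimplexCategory.mk 1)) :=
  X.map (mkOfLe i j h).op x

lemma E_d0 {n : ℕ} (x : X _⦋n⦌) (i j : Fin (n + 1)) (h : i ≤ j) :
    X.δ 0 (E x i j h) = V x j := by
  have h1 : X.δ 0 (E x i j h) =
      X.map (SimplexCategory.δ 0 ≫ mkOfLe i j h).op x := map_map _ _ _
  rw [h1, eq_const_of_zero (SimplexCategory.δ 0 ≫ mkOfLe i j h)]
  rfl

lemma E_d1 {n : ℕ} (x : X _⦋n⦌) (i j : Fin (n + 1)) (h : i ≤ j) :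
    X.δ 1 (E x i j h) = V x i := by
  have h1 : X.δ 1 (E x i j h) =
      X.map (SimplexCategory.δ 1 ≫ mkOfLe i j h).op x := map_map _ _ _
  rw [h1, eq_const_of_zero (SimplexCategory.δ 1 ≫ mkOfLe i j h)]
  rfl

lemma E_self {n : ℕ} (x : X _⦋n⦌) (i : Fin (n + 1)) :
    E x i i le_rfl = X.σ 0 (V x i) := by
  have h1 : X.σ 0 (V x i) =
      X.map (SimplexCategory.σ 0 ≫
        SimplexCategory.const (SimplexCategory.mk 0) (SimplexCategory.mk n) i).op x :=
    map_map _ _ _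
  rw [h1]
  exact congrArg (fun f => X.map (Quiver.Hom.op f) x) (Hom.ext_one_left _ _)

lemma succAbove_two_zero (n : ℕ) : Fin.succAbove (2 : Fin (n+3)) 0 = 0 := by
  rw [Fin.succAbove_of_castSucc_lt]
  · rfl
  · rw [Fin.lt_def]; simp [Nat.mod_eq_of_lt (show 2 < n + 2 + 1 by omega)]

lemma succAbove_two_one (n : ℕ) : Fin.succAbove (2 : Fin (n+3)) 1 = 1 := by
  rw [Fin.succAbove_of_castSucc_lt]
  · rfl
  · rw [Fin.lt_def]; simp [Nat.mod_eq_of_lt (show 2 < n + 2 + 1 by omega)]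

/-- `iterD2` is the first edge. -/
lemma iterD2_eq : ∀ (n : ℕ) (x : X _⦋n+1⦌),
    iterD2 X n x = E x 0 1 (Fin.zero_le _) := fun n x =>
  match n, x with
  | 0, x => by
    show x = X.map (mkOfLe 0 1 _).op x
    have : mkOfLe (0 : Fin 2) 1 (Fin.zero_le _) = 𝟙 (SimplexCategory.mk 1) := by
      apply Hom.ext_one_left <;> rfl
    rw [this, op_id, X.map_id]
    rfl
  | n + 1, x => by
    show iterD2 X n (X.δ 2 x) = _
    rw [iterD2_eq n (X.δ 2 x)]
    show X.map (mkOfLe 0 1 _).op (X.map (SimplexCategory.δ 2).op x) = _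
    rw [map_map]
    apply congrArg (fun f => X.map (Quiver.Hom.op f) x)
    apply Hom.ext_one_left
    · exact succAbove_two_zero n
    · exact succAbove_two_one n

/-- `iterD1` is the zeroth vertex. -/
lemma iterD1_eq : ∀ (n : ℕ) (y : X _⦋n⦌), iterD1 X n y = V y 0 := fun n y =>
  match n, y with
  | 0, y => by
    show y = X.map (SimplexCategory.const _ _ 0).op y
    have : SimplexCategory.const (SimplexCategory.mk 0) (SimplexCategory.mk 0) 0 =
        𝟙 (SimplexCategory.mk 0) := const_eq_id
    rw [this, op_id, X.map_id]
    rfl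
  | n + 1, y => by
    show iterD1 X n (X.δ 1 y) = _
    rw [iterD1_eq n (X.δ 1 y)]
    show X.map (SimplexCategory.const _ _ 0).op (X.map (SimplexCategory.δ 1).op y) = _
    rw [map_map]
    apply congrArg (fun f => X.map (Quiver.Hom.op f) y)
    rw [const_comp]
    apply congrArg
    show Fin.succAbove (1 : Fin (n+2)) 0 = 0
    simp

/-- faces and vertices after `δ 0` -/
lemma E_d0_shift {n : ℕ} (x : X _⦋n+1⦌) (i j : Fin (n+1)) (h : i ≤ j) :
    E (X.δ 0 x) i j h = E x i.succ j.succ (Fin.succ_le_succ_iff.2 h) := by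
  show X.map (mkOfLe i j h).op (X.map (SimplexCategory.δ 0).op x) = _
  rw [map_map]
  apply congrArg (fun f => X.map (Quiver.Hom.op f) x)
  apply Hom.ext_one_left
  · show Fin.succAbove (0 : Fin (n+2)) i = i.succ
    simp
  · show Fin.succAbove (0 : Fin (n+2)) j = j.succ
    simp

lemma V_d0_shift {n : ℕ} (x : X _⦋n+1⦌) (i : Fin (n+1)) :
    V (X.δ 0 x) i = V x i.succ := by
  show X.map (SimplexCategory.const (SimplexCategory.mk 0) (SimplexCategory.mk n) i).op
    (X.map (SimplexCategory.δ 0).op x) = _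
  rw [map_map]
  apply congrArg (fun f => X.map (Quiver.Hom.op f) x)
  rw [const_comp]
  apply congrArg
  show Fin.succAbove (0 : Fin (n+2)) i = i.succ
  simp

/-- naturality of V and E -/
lemma V_natural {m n : ℕ} (ψ : SimplexCategory.mk m ⟶ SimplexCategory.mk n)
    (x : X _⦋n⦌) (i : Fin (m+1)) :
    V (X.map ψ.op x) i = V x (ψ.toOrderHom i) := by
  show X.map (SimplexCategory.const (SimplexCategory.mk 0) (SimplexCategory.mk m) i).op
    (X.map ψ.op x) = _
  rw [map_map]
  apply congrArg (fun f => X.map (Quiver.Hom.op f) x)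
  rw [const_comp]

lemma E_natural {m n : ℕ} (ψ : SimplexCategory.mk m ⟶ SimplexCategory.mk n)
    (x : X _⦋n⦌) (i j : Fin (m+1)) (h : i ≤ j) :
    E (X.map ψ.op x) i j h = E x (ψ.toOrderHom i) (ψ.toOrderHom j) (ψ.toOrderHom.monotone h) := by
  show X.map (mkOfLe i j h).op (X.map ψ.op x) = _
  rw [map_map]
  apply congrArg (fun f => X.map (Quiver.Hom.op f) x)
  apply Hom.ext_one_left <;> rfl

/-- the three faces of the 2-simplex given by `mkOfLeComp` -/
lemma tri_d2 {n : ℕ} (x : X _⦋n⦌) (i j k : Fin (n+1)) (h₁ : i ≤ j) (h₂ : j ≤ k) :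
    X.δ 2 (X.map (mkOfLeComp i j k h₁ h₂).op x) = E x i j h₁ := by
  show X.map (SimplexCategory.δ 2).op (X.map (mkOfLeComp i j k h₁ h₂).op x) = _
  rw [map_map]
  apply congrArg (fun f => X.map (Quiver.Hom.op f) x)
  apply Hom.ext_one_left <;> rfl

lemma tri_d0 {n : ℕ} (x : X _⦋n⦌) (i j k : Fin (n+1)) (h₁ : i ≤ j) (h₂ : j ≤ k) :
    X.δ 0 (X.map (mkOfLeComp i j k h₁ h₂).op x) = E x j k h₂ := by
  show X.map (SimplexCategory.δ 0).op (X.map (mkOfLeComp i j k h₁ h₂).op x) = _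
  rw [map_map]
  apply congrArg (fun f => X.map (Quiver.Hom.op f) x)
  apply Hom.ext_one_left <;> rfl

lemma tri_d1 {n : ℕ} (x : X _⦋n⦌) (i j k : Fin (n+1)) (h₁ : i ≤ j) (h₂ : j ≤ k) :
    X.δ 1 (X.map (mkOfLeComp i j k h₁ h₂).op x) = E x i k (h₁.trans h₂) := by
  show X.map (SimplexCategory.δ 1).op (X.map (mkOfLeComp i j k h₁ h₂).op x) = _
  rw [map_map]
  apply congrArg (fun f => X.map (Quiver.Hom.op f) x)
  apply Hom.ext_one_left <;> rfl

end Paper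
namespace Paper
open SimplexCategory
variable {X : SSet.{u}}

/-- the edge from `i` to `j`, as a morphism in the category `Ob X G`. -/
def homOf (G : Gadget X) {n : ℕ} (x : X _⦋n⦌) {i j : Fin (n+1)} (h : i ≤ j) :
    (show Ob X G from V x j) ⟶ (show Ob X G from V x i) :=
  ⟨E x i j h, E_d0 x i j h, E_d1 x i j h⟩

lemma homOf_comp (G : Gadget X) {n : ℕ} (x : X _⦋n⦌) {i j k : Fin (n+1)}
    (h₁ : i ≤ j) (h₂ : j ≤ k) :
    homOf G x (h₁.trans h₂) = homOf G x h₂ ≫ homOf G x h₁ := by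
  apply Subtype.ext
  exact ((comp'_spec G (homOf G x h₂) (homOf G x h₁)
    (X.map (mkOfLeComp i j k h₁ h₂).op x)
    (tri_d2 x i j k h₁ h₂) (tri_d0 x i j k h₁ h₂)).trans
    (tri_d1 x i j k h₁ h₂)).symm
lemma homOf_self (G : Gadget X) {n : ℕ} (x : X _⦋n⦌) (i : Fin (n+1)) :
    homOf G x (le_refl i) = 𝟙 (show Ob X G from V x i) := by
  apply Subtype.ext
  exact E_self x i

/-- an `n`-simplex of `X` as an `n`-chain of composable arrows in `(Ob X G)ᵒᵖ`. -/
def mkFunctor (G : Gadget X) {n : ℕ} (x : X _⦋n⦌) : ComposableArrows (Ob X G)ᵒᵖ n where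
  obj i := op (show Ob X G from V x i)
  map {i j} f := (homOf G x (leOfHom f)).op
  map_id i := congrArg Quiver.Hom.op (homOf_self G x i)
  map_comp {i j k} f g := by
    show (homOf G x _).op = (homOf G x (leOfHom f)).op ≫ (homOf G x (leOfHom g)).op
    rw [← op_comp]
    exact congrArg Quiver.Hom.op (homOf_comp G x (leOfHom f) (leOfHom g))

/-- underlying 1-simplex of a morphism -/
def valOf {G : Gadget X} {a b : Ob X G} (u : a ⟶ b) : X.obj (op (SimplexCategory.mk 1)) :=
  (show Hom' X a b from u).1

lemma op_hom_ext (G : Gadget X) {A B A' B' : (Ob X G)ᵒᵖ}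
    (hA : A = A') (hB : B = B') (u : A ⟶ B) (v : A' ⟶ B')
    (h : valOf u.unop = valOf v.unop) : u = eqToHom hA ≫ v ≫ eqToHom hB.symm := by
  subst hA; subst hB
  simp only [eqToHom_refl, Category.comp_id, Category.id_comp]
  exact Quiver.Hom.unop_inj (Subtype.ext h)

lemma toNerve_natural (G : Gadget X) {m n : ℕ} (ψ : SimplexCategory.mk m ⟶ SimplexCategory.mk n)
    (x : X _⦋n⦌) :
    mkFunctor G (X.map ψ.op x) =
      (mkFunctor G x).whiskerLeft (SimplexCategory.toCat.map ψ).toFunctor := by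
  refine CategoryTheory.Functor.ext (fun i => congrArg op (V_natural ψ x i)) ?_
  intro i j u
  apply op_hom_ext G (congrArg op (V_natural ψ x i)) (congrArg op (V_natural ψ x j))
  show E (X.map ψ.op x) i j _ = E x _ _ _
  rw [E_natural]
  rfl

/-- the simplicial map `X ⟶ nerve (Ob X G)ᵒᵖ`. -/
def toNerve (G : Gadget X) : X ⟶ nerve (Ob X G)ᵒᵖ where
  app Δ := ↾fun x => mkFunctor G (n := Δ.unop.len) x
  naturality Δ Δ' f := by
    ext x
    exact toNerve_natural G (m := Δ'.unop.len) (n := Δ.unop.len) f.unop x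

end Paper
namespace Paper
open SimplexCategory
variable {X : SSet.{u}}

lemma V0 (x : X _⦋0⦌) : V x 0 = x := by
  show X.map (SimplexCategory.const (SimplexCategory.mk 0) (SimplexCategory.mk 0) 0).op x = x
  rw [const_eq_id, op_id, X.map_id]
  rfl

lemma E01_id (x : X _⦋1⦌) : E x 0 1 (Fin.zero_le _) = x := by
  show X.map (mkOfLe 0 1 _).op x = x
  have : mkOfLe (0 : Fin 2) 1 (Fin.zero_le _) = 𝟙 (SimplexCategory.mk 1) := by
    apply Hom.ext_one_left <;> rfl
  rw [this, op_id, X.map_id]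
  rfl

/-- first arrow of a chain of composable arrows, as a 1-simplex of `X` -/
def arr1 {G : Gadget X} {n : ℕ} (F : ComposableArrows (Ob X G)ᵒᵖ (n+1)) :
    X.obj (op (SimplexCategory.mk 1)) :=
  valOf (F.map' 0 1).unop

lemma arr1_mk (G : Gadget X) {n : ℕ} (x : X _⦋n+1⦌) :
    arr1 (mkFunctor G x) = E x 0 1 (Fin.zero_le _) := rfl

lemma arr1_d0 {G : Gadget X} {n : ℕ} (F : ComposableArrows (Ob X G)ᵒᵖ (n+1)) :
    X.δ 0 (arr1 F) = ((F.obj 1).unop : X _⦋0⦌) :=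
  (show Hom' X ((F.obj 1).unop) ((F.obj 0).unop) from (F.map' 0 1).unop).2.1

lemma arr1_d1 {G : Gadget X} {n : ℕ} (F : ComposableArrows (Ob X G)ᵒᵖ (n+1)) :
    X.δ 1 (arr1 F) = ((F.obj 0).unop : X _⦋0⦌) :=
  (show Hom' X ((F.obj 1).unop) ((F.obj 0).unop) from (F.map' 0 1).unop).2.2

/-- compatibility of `mkFunctor` with the zeroth face -/
lemma mkFunctor_d0 (G : Gadget X) {n : ℕ} (x : X _⦋n+1⦌) :
    mkFunctor G (X.δ 0 x) = (mkFunctor G x).δ₀ := by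
  refine CategoryTheory.Functor.ext (fun i => congrArg op (V_d0_shift x i)) ?_
  intro i j u
  apply op_hom_ext G (congrArg op (V_d0_shift x i)) (congrArg op (V_d0_shift x j))
  show E (X.δ 0 x) i j _ = E x i.succ j.succ _
  rw [E_d0_shift]

lemma toNerve_bijective (G : Gadget X) :
    ∀ n : ℕ, Function.Bijective (fun x : X _⦋n⦌ => mkFunctor G x) := by
  intro n
  induction n with
  | zero =>
    constructor
    · intro x y h
      replace h : mkFunctor G x = mkFunctor G y := h
      have h2 := congrArg (fun F : ComposableArrows (Ob X G)ᵒᵖ 0 => (F.obj 0).unop) h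
      show x = y
      rw [← V0 x, ← V0 y]
      exact h2
    · intro F
      refine ⟨(F.obj 0).unop, ?_⟩
      show mkFunctor G ((F.obj 0).unop) = F
      refine ComposableArrows.ext₀ ?_
      show op (V ((F.obj 0).unop) 0) = _
      refine (congrArg op (V0 (X := X) ((F.obj 0).unop))).trans ?_
      rfl
  | succ n ih =>
    match n, ih with
    | 0, _ =>
      constructor
      · intro x y h
        replace h : mkFunctor G x = mkFunctor G y := h
        have h2 : arr1 (mkFunctor G x) = arr1 (mkFunctor G y) := congrArg _ h
        rw [arr1_mk, arr1_mk, E01_id, E01_id] at h2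
        exact h2
      · intro F
        refine ⟨arr1 F, ?_⟩
        show mkFunctor G (arr1 F) = F
        have hleft : (mkFunctor G (arr1 F)).left = F.left := by
          show op (V (arr1 F) 0) = _
          have h1 : V (arr1 F) 0 = X.δ 1 (arr1 F) := by
            rw [← E_d1 (arr1 F) 0 1 (Fin.zero_le _), E01_id]
          rw [h1, arr1_d1]
          rfl
        have hright : (mkFunctor G (arr1 F)).right = F.right := by
          show op (V (arr1 F) 1) = _
          have h1 : V (arr1 F) 1 = X.δ 0 (arr1 F) := by
            rw [← E_d0 (arr1 F) 0 1 (Fin.zero_le _), E01_id]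
          rw [h1, arr1_d0]
          rfl
        refine ComposableArrows.ext₁ hleft hright ?_
        apply op_hom_ext G hleft hright
        show E (arr1 F) 0 1 _ = valOf (F.map' 0 1).unop
        rw [E01_id]
        rfl
    | m + 1, ih =>
      constructor
      · intro x y h
        replace h : mkFunctor G x = mkFunctor G y := h
        apply G.inj m
        · rw [iterD2_eq, iterD2_eq]
          have h2 : arr1 (mkFunctor G x) = arr1 (mkFunctor G y) := congrArg _ h
          rw [arr1_mk, arr1_mk] at h2
          exact h2
        · apply ih.1
          show mkFunctor G (X.δ 0 x) = mkFunctor G (X.δ 0 y)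
          rw [mkFunctor_d0, mkFunctor_d0, h]
      · intro F
        obtain ⟨y, hy⟩ := ih.2 F.δ₀
        replace hy : mkFunctor G y = F.δ₀ := hy
        have hcond : X.δ 0 (arr1 F) = iterD1 X (m+1) y := by
          rw [arr1_d0, iterD1_eq]
          have h3 : V y 0 = ((mkFunctor G y).obj 0).unop := rfl
          rw [h3, hy]
          rfl
        refine ⟨G.inv m (arr1 F, y) hcond, ?_⟩
        show mkFunctor G (G.inv m (arr1 F, y) hcond) = F
        set x := G.inv m (arr1 F, y) hcond with hx
        have hE : E x 0 1 (Fin.zero_le _) = arr1 F := by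
          rw [← iterD2_eq]
          exact G.iterD2_inv m (arr1 F, y) hcond
        have hdx : X.δ 0 x = y := G.δ0_inv m (arr1 F, y) hcond
        have hobj0 : (mkFunctor G x).obj' 0 = F.obj' 0 := by
          show op (V x 0) = _
          have h1 : V x 0 = X.δ 1 (E x 0 1 (Fin.zero_le _)) := (E_d1 x 0 1 _).symm
          rw [h1, hE, arr1_d1]
          rfl
        have hδ : (mkFunctor G x).δ₀ = F.δ₀ := by
          rw [← mkFunctor_d0, hdx, hy]
        refine ComposableArrows.ext_succ hobj0 hδ ?_
        apply op_hom_ext G hobj0 ((Functor.congr_obj hδ.symm 0).symm)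
        show E x 0 1 _ = valOf (F.map' 0 1).unop
        rw [hE]
        rfl

end Paper
namespace Paper
variable {X : SSet.{u}}

noncomputable def isoNerve (G : Gadget X) : X ≅ nerve (Ob X G)ᵒᵖ := by
  have : IsIso (toNerve G) := by
    have : ∀ Δ : SimplexCategoryᵒᵖ, IsIso ((toNerve G).app Δ) := by
      intro Δ
      rw [CategoryTheory.isIso_iff_bijective]
      exact toNerve_bijective G Δ.unop.len
    apply NatIso.isIso_of_isIso_app
  exact asIso (toNerve G)


/-- Lemma 6.4: a simplicial set `X` in which every `n`-simplex (`n ≥ 2`) is uniquely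
determined by its first edge and its `0`-th face (via the bijections `Dₙ`) is isomorphic to
the nerve of a category with objects `X₀` and morphisms `X₁`, where `f ∈ X₁` is a morphism
`d₀ f ⟶ d₁ f`, identities are `s₀ x`, and composition is `f₁ ∘ f₂ = d₁ (D₂⁻¹ (f₁, f₂))`. -/
theorem statement5 (X : SSet.{u})
    (hD : ∀ n : ℕ, Set.BijOn
      (fun x : X _⦋n + 2⦌ => ((iterD2 X (n + 1) x, X.δ 0 x) : X _⦋1⦌ × X _⦋n + 1⦌))
      Set.univ
      {q : X _⦋1⦌ × X _⦋n + 1⦌ | X.δ 0 q.1 = iterD1 X (n + 1) q.2}) :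
    ∃ (C : Type u) (inst : SmallCategory C) (e : C ≃ X _⦋0⦌),
      @NerveCompat X C inst e := by
  have pick : ∀ (n : ℕ) (q : X _⦋1⦌ × X _⦋n+1⦌), X.δ 0 q.1 = iterD1 X (n+1) q.2 →
      ∃ x : X _⦋n+2⦌, (iterD2 X (n+1) x, X.δ 0 x) = q := by
    intro n q hq
    obtain ⟨x, -, hx⟩ := (hD n).2.2 hq
    exact ⟨x, hx⟩
  have hG : Nonempty (Gadget X) := ⟨{
    inv := fun n q hq => (pick n q hq).choose
    iterD2_inv := fun n q hq => congrArg Prod.fst (pick n q hq).choose_spec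
    δ0_inv := fun n q hq => congrArg Prod.snd (pick n q hq).choose_spec
    inj := fun n x y h2 h0 =>
      (hD n).2.1 (Set.mem_univ x) (Set.mem_univ y) (Prod.ext h2 h0) }⟩
  obtain ⟨G⟩ := hG
  exact ⟨Ob X G, instCat G, Equiv.refl _, fun a b => Equiv.refl _, fun a => rfl,
    fun a b c f g x h2 h0 => comp'_spec G f g x h2 h0, ⟨isoNerve G⟩⟩

end Paper
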